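/- Let n ≥ 1 and ε ∈ ℝ. Let P, Q, B̃, D ∈ Matrix (Fin n) (Fin n) ℝ with P symmetric, Q + Qᵀ = B̃, and set Q_{xx} = B̃ * D − Dᵀ * P * D. Let A : ℝ → Matrix (Fin n) (Fin n) ℝ with A(t) symmetric for every t, and let W : ℝ → (Fin n → ℝ) be differentiable, satisfying the semi-discrete scheme P *ᵥ W'(t) = −(1/2) ((A(t) * Q + Q * A(t)) *ᵥ W(t)) + ε (Q_{xx} *ᵥ W(t)) for all t. Then for all t: d/dt [ W(t) ⬝ᵥ (P *ᵥ W(t)) ] = −W(t) ⬝ᵥ ((A(t) * B̃) *ᵥ W(t)) + 2ε W(t) ⬝ᵥ ((B̃ * D) *ᵥ W(t)) − 2ε (D *ᵥ W(t)) ⬝ᵥ (P *ᵥ (D *ᵥ W(t))). -/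

import Mathlib

open Matrix

lemma dot_hasDerivAt {n : ℕ} {f g : ℝ → Fin n → ℝ} {f' g' : Fin n → ℝ} {t : ℝ}
    (hf : ∀ i, HasDerivAt (fun s => f s i) (f' i) t)
    (hg : ∀ i, HasDerivAt (fun s => g s i) (g' i) t) :
    HasDerivAt (fun s => f s ⬝ᵥ g s) (f' ⬝ᵥ g t + f t ⬝ᵥ g') t := by
  simp only [dotProduct]
  rw [← Finset.sum_add_distrib]
  exact HasDerivAt.fun_sum fun i _ => (hf i).mul (hg i)

/-- Semi-discrete energy rate: for the SBP semi-discretization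
`P W' = -(1/2)(AQ + QA)W + ε Q_{xx} W` with `P` symmetric, `Q + Qᵀ = B̃`,
`Q_{xx} = B̃D - DᵀPD` and `A(t)` symmetric, the discrete energy `WᵀPW` satisfies
`d/dt (WᵀPW) = -Wᵀ(AB̃)W + 2ε Wᵀ(B̃D)W - 2ε (DW)ᵀP(DW)`. -/
theorem semidiscrete_energy_rate
    (n : ℕ) (hn : 1 ≤ n) (ε : ℝ)
    (P Q Bt D Qxx : Matrix (Fin n) (Fin n) ℝ)
    (hP : Pᵀ = P) (hSBP : Q + Qᵀ = Bt) (hQxx : Qxx = Bt * D - Dᵀ * P * D)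
    (A : ℝ → Matrix (Fin n) (Fin n) ℝ) (hA : ∀ t, (A t)ᵀ = A t)
    (W W' : ℝ → Fin n → ℝ) (hW : ∀ t, HasDerivAt W (W' t) t)
    (hscheme : ∀ t, P *ᵥ W' t =
      -(1 / 2 : ℝ) • ((A t * Q + Q * A t) *ᵥ W t) + ε • (Qxx *ᵥ W t)) :
    ∀ t, HasDerivAt (fun s => W s ⬝ᵥ (P *ᵥ W s))
      (-(W t ⬝ᵥ ((A t * Bt) *ᵥ W t)) + 2 * ε * (W t ⬝ᵥ ((Bt * D) *ᵥ W t))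
        - 2 * ε * ((D *ᵥ W t) ⬝ᵥ (P *ᵥ (D *ᵥ W t)))) t := by
  intro t
  have hWc : ∀ i, HasDerivAt (fun s => W s i) (W' t i) t := fun i =>
    (hasDerivAt_pi.mp (hW t)) i
  have hPWc : ∀ i, HasDerivAt (fun s => (P *ᵥ W s) i) ((P *ᵥ W' t) i) t := by
    intro i
    simp only [mulVec, dotProduct]
    exact HasDerivAt.fun_sum fun j _ => (hWc j).const_mul (P i j)
  have key := dot_hasDerivAt hWc hPWc
  -- rewrite the derivative value
  have hsym : ∀ x y : Fin n → ℝ, x ⬝ᵥ (P *ᵥ y) = y ⬝ᵥ (P *ᵥ x) := by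
    intro x y
    rw [dotProduct_mulVec, ← mulVec_transpose, hP, dotProduct_comm]
  have htrans : ∀ (M : Matrix (Fin n) (Fin n) ℝ) (x y : Fin n → ℝ),
      x ⬝ᵥ (M *ᵥ y) = (Mᵀ *ᵥ x) ⬝ᵥ y := by
    intro M x y
    rw [dotProduct_mulVec, ← mulVec_transpose]
  have hval : W' t ⬝ᵥ (P *ᵥ W t) + W t ⬝ᵥ (P *ᵥ W' t)
      = -(W t ⬝ᵥ ((A t * Bt) *ᵥ W t)) + 2 * ε * (W t ⬝ᵥ ((Bt * D) *ᵥ W t))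
        - 2 * ε * ((D *ᵥ W t) ⬝ᵥ (P *ᵥ (D *ᵥ W t))) := by
    have h1 : W' t ⬝ᵥ (P *ᵥ W t) = W t ⬝ᵥ (P *ᵥ W' t) := hsym _ _
    have h2 : W t ⬝ᵥ (P *ᵥ W' t)
        = -(1 / 2 : ℝ) * (W t ⬝ᵥ ((A t * Q + Q * A t) *ᵥ W t))
          + ε * (W t ⬝ᵥ (Qxx *ᵥ W t)) := by
      rw [hscheme t]
      simp [dotProduct_add, dotProduct_smul, smul_eq_mul]
    have hQA : W t ⬝ᵥ ((Q * A t) *ᵥ W t) = W t ⬝ᵥ ((A t * Qᵀ) *ᵥ W t) := by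
      rw [htrans (Q * A t), transpose_mul, hA, dotProduct_comm, htrans (A t * Qᵀ),
        transpose_mul, transpose_transpose, hA]
    have hAB : W t ⬝ᵥ ((A t * Q + Q * A t) *ᵥ W t)
        = W t ⬝ᵥ ((A t * Bt) *ᵥ W t) := by
      rw [add_mulVec, dotProduct_add, hQA, ← dotProduct_add, ← add_mulVec,
        ← Matrix.mul_add, hSBP]
    have hQxxv : W t ⬝ᵥ (Qxx *ᵥ W t)
        = W t ⬝ᵥ ((Bt * D) *ᵥ W t) - (D *ᵥ W t) ⬝ᵥ (P *ᵥ (D *ᵥ W t)) := by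
      rw [hQxx, sub_mulVec, dotProduct_sub]
      congr 1
      rw [Matrix.mul_assoc, mulVec_mulVec, ← mulVec_mulVec, htrans Dᵀ,
        transpose_transpose]
    rw [h1, h2, hAB, hQxxv]; ring
  rw [hval] at key
  exact key
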